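/- Let β > 0, J > 0 and let K ∈ M₂(ℂ)^{⊗3} be the Ising interaction operator K = A I⊗I⊗I + B σ_z⊗σ_z⊗I + B σ_z⊗I⊗σ_z + C I⊗σ_z⊗σ_z with A = K₀²R₀+K₃²R₃, B = K₀K₃(R₀+R₃), C = K₀²R₃+K₃²R₀, where K₀=(e^β+1)/2, K₃=(e^β−1)/2, R₀=(e^{Jβ}+1)/2, R₃=(e^{Jβ}−1)/2. Set α = 1/τ₁ with τ₁ = A²+2B²+C². Then h = α·I satisfies the invariance equation tr₂₃(K* (I ⊗ h ⊗ h) K) = h. -/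

import Mathlib

open Matrix Kronecker

noncomputable section

def I2 : Matrix (Fin 2) (Fin 2) ℂ := 1

def sigmaZ : Matrix (Fin 2) (Fin 2) ℂ := !![1, 0; 0, -1]

/-- Type of elements of `M₂(ℂ) ⊗ M₂(ℂ) ⊗ M₂(ℂ)` realized as `8×8` matrices. -/
abbrev M8 := Matrix ((Fin 2 × Fin 2) × Fin 2) ((Fin 2 × Fin 2) × Fin 2) ℂ

/-- Normalized partial trace over the last two tensor factors:
`tr₂₃(a ⊗ b ⊗ c) = (1/4) Tr(b) Tr(c) · a`, extended linearly. -/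
def tr23 (K : M8) : Matrix (Fin 2) (Fin 2) ℂ :=
  fun i j => (1 / 4 : ℂ) * ∑ k : Fin 2, ∑ l : Fin 2, K ((i, k), l) ((j, k), l)

/-- `K = A I⊗I⊗I + B σ_z⊗σ_z⊗I + B σ_z⊗I⊗σ_z + C I⊗σ_z⊗σ_z`. -/
def KABC (A B C : ℝ) : M8 :=
  (A : ℂ) • ((I2 ⊗ₖ I2) ⊗ₖ I2) + (B : ℂ) • ((sigmaZ ⊗ₖ sigmaZ) ⊗ₖ I2) +
    (B : ℂ) • ((sigmaZ ⊗ₖ I2) ⊗ₖ sigmaZ) + (C : ℂ) • ((I2 ⊗ₖ sigmaZ) ⊗ₖ sigmaZ)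

/-- Auxiliary sign function: diagonal entries of `σ_z`. -/
def sgn : Fin 2 → ℂ := ![1, -1]

lemma sigmaZ_diag : sigmaZ = Matrix.diagonal sgn := by
  ext i j; fin_cases i <;> fin_cases j <;> simp [sigmaZ, sgn, Matrix.diagonal]

lemma I2_diag : I2 = Matrix.diagonal (fun _ => (1:ℂ)) := by
  simp [I2]

/-- Diagonal entries of `KABC`. -/
def dK (A B C : ℝ) : (Fin 2 × Fin 2) × Fin 2 → ℂ := fun p =>
  (A:ℂ) + B * sgn p.1.1 * sgn p.1.2 + B * sgn p.1.1 * sgn p.2 + C * sgn p.1.2 * sgn p.2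

lemma kdiag (A B C : ℝ) : KABC A B C = Matrix.diagonal (dK A B C) := by
  rw [KABC, sigmaZ_diag, I2_diag]
  simp only [Matrix.diagonal_kronecker_diagonal]
  ext p q
  simp only [Matrix.add_apply, Matrix.smul_apply, Matrix.diagonal_apply, dK, smul_eq_mul]
  split_ifs <;> ring

lemma mid (c : ℂ) : (I2 ⊗ₖ (c • I2)) ⊗ₖ (c • I2) = (c^2) • (1 : M8) := by
  simp only [I2, Matrix.kronecker_smul, Matrix.smul_kronecker, Matrix.one_kronecker_one,
    smul_smul]
  ring_nf

lemma star_dK (A B C : ℝ) (p : (Fin 2 × Fin 2) × Fin 2) :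
    star (dK A B C p) = dK A B C p := by
  rcases p with ⟨⟨i,k⟩,l⟩
  fin_cases i <;> fin_cases k <;> fin_cases l <;>
    simp [dK, sgn, Complex.star_def, map_add, _root_.map_mul]

lemma key (A B C τ : ℝ) (hτ : τ ≠ 0) (hABC : A^2+2*B^2+C^2 = τ) :
    tr23 ((KABC A B C)ᴴ * ((I2 ⊗ₖ (((1/τ:ℝ):ℂ) • I2)) ⊗ₖ (((1/τ:ℝ):ℂ) • I2)) * KABC A B C)
      = ((1/τ:ℝ):ℂ) • I2 := by
  rw [mid, kdiag, Matrix.diagonal_conjTranspose]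
  have hs : star (dK A B C) = dK A B C := funext (star_dK A B C)
  rw [show star (dK A B C) = dK A B C from hs]
  rw [Matrix.mul_smul, Matrix.mul_one, Matrix.smul_mul, Matrix.diagonal_mul_diagonal]
  ext i j
  have hτ' : (τ:ℂ) ≠ 0 := Complex.ofReal_ne_zero.mpr hτ
  have h' : (A:ℂ)^2 + 2*(B:ℂ)^2 + (C:ℂ)^2 = (τ:ℂ) := by
    exact_mod_cast congrArg Complex.ofReal hABC
  fin_cases i <;> fin_cases j <;>
    simp [tr23, Matrix.smul_apply, Matrix.diagonal_apply, I2, Matrix.one_apply,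
      Fin.sum_univ_two, dK, sgn] <;>
  · field_simp
    linear_combination (4:ℂ) * h'

/-- `h = (1/τ₁) I` is invariant under the Ising transition expectation. -/
theorem invariance_identity (β J : ℝ) (hβ : 0 < β) (hJ : 0 < J) :
    let K0 : ℝ := (Real.exp β + 1) / 2
    let K3 : ℝ := (Real.exp β - 1) / 2
    let R0 : ℝ := (Real.exp (J * β) + 1) / 2
    let R3 : ℝ := (Real.exp (J * β) - 1) / 2
    let A : ℝ := K0 ^ 2 * R0 + K3 ^ 2 * R3
    let B : ℝ := K0 * K3 * (R0 + R3)
    let C : ℝ := K0 ^ 2 * R3 + K3 ^ 2 * R0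
    let τ₁ : ℝ := A ^ 2 + 2 * B ^ 2 + C ^ 2
    let h : Matrix (Fin 2) (Fin 2) ℂ := ((1 / τ₁ : ℝ) : ℂ) • I2
    tr23 ((KABC A B C)ᴴ * ((I2 ⊗ₖ h) ⊗ₖ h) * KABC A B C) = h := by
  intro K0 K3 R0 R3 A B C τ₁ h
  have e1 : (1:ℝ) < Real.exp β := by nlinarith [Real.add_one_le_exp β]
  have e2 : (1:ℝ) < Real.exp (J * β) := by
    nlinarith [Real.add_one_le_exp (J * β), mul_pos hJ hβ]
  have hK0 : 0 < K0 := by simp only [K0]; nlinarith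
  have hK3 : 0 < K3 := by simp only [K3]; nlinarith
  have hR0 : 0 < R0 := by simp only [R0]; nlinarith
  have hR3 : 0 < R3 := by simp only [R3]; nlinarith
  have hA : 0 < A := add_pos (mul_pos (pow_pos hK0 2) hR0) (mul_pos (pow_pos hK3 2) hR3)
  have hτ : 0 < τ₁ := by
    show 0 < A ^ 2 + 2 * B ^ 2 + C ^ 2
    nlinarith [sq_nonneg B, sq_nonneg C, pow_pos hA 2]
  exact key A B C τ₁ (ne_of_gt hτ) rfl
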